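/- Hersch-type bound for the Paneitz operator: if g_w = e^{2w} g_r is a conformal metric on S^4 with Vol(S^4, g_w) = ω_4, and if the balanced condition ∫_{S^4} e^{4w} x_i dv_{g_r} = 0 holds for i = 1,...,5, then λ_2(P_{g_w}) ≤ 24. -/

import Mathlib

open MeasureTheory

/-- The `i`-th standard coordinate function of `ℝ⁵` restricted to the round sphere `S⁴`. -/
noncomputable def sphereCoord (i : Fin 5)
    (p : Metric.sphere (0 : EuclideanSpace ℝ (Fin 5)) 1) : ℝ :=
  (p : EuclideanSpace ℝ (Fin 5)) i

lemma sphereCoord_continuous (i : Fin 5) : Continuous (sphereCoord i) := by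
  exact (continuous_apply i).comp ((PiLp.continuous_ofLp 2 _).comp continuous_subtype_val)

lemma sphereCoord_sum_sq (p : Metric.sphere (0 : EuclideanSpace ℝ (Fin 5)) 1) :
    ∑ i : Fin 5, (sphereCoord i p) ^ 2 = 1 := by
  have hp : ‖(p : EuclideanSpace ℝ (Fin 5))‖ = 1 := by
    have := p.2
    simp only [Metric.mem_sphere, dist_eq_norm, sub_zero] at this; exact this
  have := EuclideanSpace.norm_eq (p : EuclideanSpace ℝ (Fin 5))
  rw [hp] at this
  have h1 : ∑ i : Fin 5, ‖(p : EuclideanSpace ℝ (Fin 5)) i‖ ^ 2 = 1 := by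
    have hnn : 0 ≤ ∑ i : Fin 5, ‖(p : EuclideanSpace ℝ (Fin 5)) i‖ ^ 2 :=
      Finset.sum_nonneg fun i _ => sq_nonneg _
    nlinarith [Real.sq_sqrt hnn, this]
  simpa [sphereCoord, Real.norm_eq_abs, sq_abs] using h1

lemma sphereCoord_abs_le (i : Fin 5) (p : Metric.sphere (0 : EuclideanSpace ℝ (Fin 5)) 1) :
    |sphereCoord i p| ≤ 1 := by
  have h := sphereCoord_sum_sq p
  have : (sphereCoord i p) ^ 2 ≤ 1 := by
    have := Finset.single_le_sum (f := fun j => (sphereCoord j p) ^ 2)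
      (fun j _ => sq_nonneg _) (Finset.mem_univ i)
    simpa [sphereCoord_sum_sq p] using this
  nlinarith [abs_nonneg (sphereCoord i p), sq_abs (sphereCoord i p)]

theorem hersch_bound_paneitz_sphere
    (μ : Measure (Metric.sphere (0 : EuclideanSpace ℝ (Fin 5)) 1)) [IsFiniteMeasure μ]
    (hμpos : 0 < (μ Set.univ).toReal)
    (w : Metric.sphere (0 : EuclideanSpace ℝ (Fin 5)) 1 → ℝ)
    (Pgr : (Metric.sphere (0 : EuclideanSpace ℝ (Fin 5)) 1 → ℝ) →
           (Metric.sphere (0 : EuclideanSpace ℝ (Fin 5)) 1 → ℝ))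
    (lam2 : ℝ)
    (hPgr : ∀ (i : Fin 5) p, Pgr (sphereCoord i) p = 24 * sphereCoord i p)
    (hexp : Integrable (fun p => Real.exp (4 * w p)) μ)
    (hvol : ∫ p, Real.exp (4 * w p) ∂μ = (μ Set.univ).toReal)
    (hbal : ∀ i : Fin 5, ∫ p, Real.exp (4 * w p) * sphereCoord i p ∂μ = 0)
    (hlam : ∀ φ : Metric.sphere (0 : EuclideanSpace ℝ (Fin 5)) 1 → ℝ,
      (∫ p, φ p * Real.exp (4 * w p) ∂μ) = 0 →
      lam2 * ∫ p, (φ p) ^ 2 * Real.exp (4 * w p) ∂μ ≤ ∫ p, φ p * Pgr φ p ∂μ) :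
    lam2 ≤ 24 := by
  -- integrability facts
  have hint1 : ∀ i : Fin 5,
      Integrable (fun p => (sphereCoord i p) ^ 2 * Real.exp (4 * w p)) μ := by
    intro i
    apply hexp.bdd_mul
    · exact ((sphereCoord_continuous i).pow 2).aestronglyMeasurable
    · refine Filter.Eventually.of_forall (fun p => (?_ : ‖(sphereCoord i p) ^ 2‖ ≤ 1))
      have := sphereCoord_abs_le i p
      rw [Real.norm_eq_abs, abs_pow]
      nlinarith [abs_nonneg (sphereCoord i p)]
  have hint2 : ∀ i : Fin 5, Integrable (fun p => (sphereCoord i p) ^ 2) μ := by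
    intro i
    exact ((sphereCoord_continuous i).pow 2).integrable_of_hasCompactSupport
      (HasCompactSupport.of_compactSpace _)
  -- per-coordinate inequality
  have key : ∀ i : Fin 5,
      lam2 * ∫ p, (sphereCoord i p) ^ 2 * Real.exp (4 * w p) ∂μ
        ≤ 24 * ∫ p, (sphereCoord i p) ^ 2 ∂μ := by
    intro i
    have hz : (∫ p, sphereCoord i p * Real.exp (4 * w p) ∂μ) = 0 := by
      rw [← hbal i]
      congr 1; ext p; ring
    have h := hlam (sphereCoord i) hz
    calc lam2 * ∫ p, (sphereCoord i p) ^ 2 * Real.exp (4 * w p) ∂μ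
        ≤ ∫ p, sphereCoord i p * Pgr (sphereCoord i) p ∂μ := h
      _ = ∫ p, 24 * (sphereCoord i p) ^ 2 ∂μ := by
          congr 1; ext p; rw [hPgr i p]; ring
      _ = 24 * ∫ p, (sphereCoord i p) ^ 2 ∂μ := by
          rw [integral_const_mul]
  -- sum over coordinates
  have hsum1 : ∑ i : Fin 5, ∫ p, (sphereCoord i p) ^ 2 * Real.exp (4 * w p) ∂μ
      = (μ Set.univ).toReal := by
    rw [← integral_finset_sum _ (fun i _ => hint1 i), ← hvol]
    congr 1; ext p
    rw [← Finset.sum_mul, sphereCoord_sum_sq p, one_mul]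
  have hsum2 : ∑ i : Fin 5, ∫ p, (sphereCoord i p) ^ 2 ∂μ = (μ Set.univ).toReal := by
    rw [← integral_finset_sum _ (fun i _ => hint2 i)]
    have : ∫ p, ∑ i : Fin 5, (sphereCoord i p) ^ 2 ∂μ = ∫ _, (1 : ℝ) ∂μ := by
      congr 1; ext p; rw [sphereCoord_sum_sq p]
    rw [this, integral_const, smul_eq_mul, mul_one]
    rfl
  have hfinal : lam2 * (μ Set.univ).toReal ≤ 24 * (μ Set.univ).toReal := by
    calc lam2 * (μ Set.univ).toReal
        = ∑ i : Fin 5, lam2 * ∫ p, (sphereCoord i p) ^ 2 * Real.exp (4 * w p) ∂μ := by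
          rw [← Finset.mul_sum, hsum1]
      _ ≤ ∑ i : Fin 5, 24 * ∫ p, (sphereCoord i p) ^ 2 ∂μ :=
          Finset.sum_le_sum fun i _ => key i
      _ = 24 * (μ Set.univ).toReal := by rw [← Finset.mul_sum, hsum2]
  exact le_of_mul_le_mul_right (by linarith) hμpos
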